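/- In the synchronous atomic-step algebra with conjunctive sequential composition, for atomic steps a, b and commands c, d: a^*;c ∥ b^*;d = (a∥b)^* ; ((c∥d) ⊓ (c ∥ b;b^*;d) ⊓ (a;a^*;c ∥ d)). -/
import Mathlib


/-- A Concurrent Refinement Algebra over a complete distributive lattice of
commands, ordered by refinement (`⊓` = nondeterministic choice, `⊥` = abort,
`⊤` = magic), with sequential composition `seq` (identity `nil`),
synchronous parallel `par`, weak conjunction `conj`, a Boolean-style
sub-lattice of atomic steps `Atomic` (with `eps` the environment-step identity
of `par`) and a sub-lattice of tests `Test`. -/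
structure CRA (C : Type*) [CompleteDistribLattice C] where
  seq : C → C → C
  par : C → C → C
  conj : C → C → C
  nil : C
  eps : C
  Atomic : C → Prop
  Test : C → Prop
  seq_assoc : ∀ a b c, seq (seq a b) c = seq a (seq b c)
  seq_nil : ∀ c, seq c nil = c
  nil_seq : ∀ c, seq nil c = c
  seq_mono_left : ∀ d : C, Monotone fun c => seq c d
  seq_mono_right : ∀ c : C, Monotone (seq c)
  top_seq : ∀ c, seq ⊤ c = ⊤
  bot_seq : ∀ c, seq ⊥ c = ⊥
  /-- sequential composition distributes over arbitrary choices on the right -/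
  seq_sInf_distrib : ∀ (S : Set C) (d : C), seq (sInf S) d = ⨅ c ∈ S, seq c d
  par_assoc : ∀ a b c, par (par a b) c = par a (par b c)
  par_comm : ∀ a b, par a b = par b a
  /-- parallel distributes over arbitrary choices -/
  par_sInf_distrib : ∀ (c : C) (S : Set C), par c (sInf S) = ⨅ d ∈ S, par c d
  nil_par_nil : par nil nil = nil
  atomic_par : ∀ a b, Atomic a → Atomic b → Atomic (par a b)
  /-- synchronous interchange law for atomic steps -/
  interchange : ∀ a b c d, Atomic a → Atomic b →
    par (seq a c) (seq b d) = seq (par a b) (par c d)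
  par_atomic_seq_nil : ∀ a c, Atomic a → par (seq a c) nil = ⊤
  atomic_eps : Atomic eps
  /-- `eps` is the identity of parallel on atomic steps -/
  eps_par_atomic : ∀ a, Atomic a → par eps a = a
  conj_assoc : ∀ a b c, conj (conj a b) c = conj a (conj b c)
  conj_comm : ∀ a b, conj a b = conj b a
  conj_idem : ∀ a, conj a a = a
  conj_bot : ∀ c, conj c ⊥ = ⊥
  conj_atomic : ∀ a b, Atomic a → Atomic b → conj a b = a ⊔ b
  conj_test : ∀ t t', Test t → Test t' → conj t t' = t ⊔ t'
  conj_interchange : ∀ a b c d, Atomic a → Atomic b →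
    conj (seq a c) (seq b d) = seq (conj a b) (conj c d)
  conj_atomic_seq_nil : ∀ a c, Atomic a → conj (seq a c) nil = ⊤
  conj_sInf_distrib : ∀ (c : C) (S : Set C), S.Nonempty →
    conj c (sInf S) = ⨅ d ∈ S, conj c d
  atomic_conj : ∀ a b, Atomic a → Atomic b → Atomic (conj a b)
  test_nil : Test nil
  test_nil_le : ∀ t, Test t → nil ≤ t
  test_seq_par_interchange : ∀ t t' c d, Test t → Test t' →
    par (seq t c) (seq t' d) = seq (t ⊔ t') (par c d)
  conj_test_interchange : ∀ t t' c d, Test t → Test t' →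
    conj (seq t c) (seq t' d) = seq (t ⊔ t') (conj c d)

namespace CRA

variable {C : Type*} [CompleteDistribLattice C] (A : CRA C)

/-- possibly infinite iteration `c^ω = μ x. nil ⊓ c;x` -/
def omega (c : C) : C :=
  OrderHom.lfp ⟨fun x => A.nil ⊓ A.seq c x,
    fun _ _ h => inf_le_inf_left _ (A.seq_mono_right c h)⟩

/-- finite iteration `c^* = ν x. nil ⊓ c;x` -/
def star (c : C) : C :=
  OrderHom.gfp ⟨fun x => A.nil ⊓ A.seq c x,
    fun _ _ h => inf_le_inf_left _ (A.seq_mono_right c h)⟩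

/-- infinite iteration `c^∞ = c^ω ; ⊤` -/
def inft (c : C) : C := A.seq (A.omega c) ⊤

/-- finite powers: `c^0 = nil`, `c^(i+1) = c ; c^i` -/
def pow (c : C) : ℕ → C
  | 0 => A.nil
  | n + 1 => A.seq c (pow c n)

end CRA

namespace CRAaux

variable {C : Type*} [CompleteDistribLattice C] (A : CRA C)

lemma seq_iInf_left' {ι : Sort*} (g : ι → C) (e : C) :
    A.seq (⨅ i, g i) e = ⨅ i, A.seq (g i) e := by
  rw [iInf, A.seq_sInf_distrib, iInf_range]

lemma par_iInf_right' {ι : Sort*} (e : C) (g : ι → C) :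
    A.par e (⨅ i, g i) = ⨅ i, A.par e (g i) := by
  rw [iInf, A.par_sInf_distrib, iInf_range]

lemma par_iInf_left' {ι : Sort*} (g : ι → C) (e : C) :
    A.par (⨅ i, g i) e = ⨅ i, A.par (g i) e := by
  rw [A.par_comm, par_iInf_right']
  simp only [A.par_comm]

lemma pow_add' (c : C) (m n : ℕ) :
    A.pow c (m + n) = A.seq (A.pow c m) (A.pow c n) := by
  induction m with
  | zero => simp [CRA.pow, A.nil_seq]
  | succ m ih =>
      have : m + 1 + n = (m + n) + 1 := by omega
      rw [this]
      show A.seq c (A.pow c (m + n)) = A.seq (A.seq c (A.pow c m)) (A.pow c n)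
      rw [ih, A.seq_assoc]

lemma pow_interchange {a b : C} (ha : A.Atomic a) (hb : A.Atomic b)
    (x y : C) (n : ℕ) :
    A.par (A.seq (A.pow a n) x) (A.seq (A.pow b n) y) =
      A.seq (A.pow (A.par a b) n) (A.par x y) := by
  induction n with
  | zero => simp [CRA.pow, A.nil_seq]
  | succ n ih =>
      show A.par (A.seq (A.seq a (A.pow a n)) x) (A.seq (A.seq b (A.pow b n)) y) =
        A.seq (A.seq (A.par a b) (A.pow (A.par a b) n)) (A.par x y)
      rw [A.seq_assoc, A.seq_assoc, A.interchange a b _ _ ha hb, ih, A.seq_assoc]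

lemma star_eq (A : CRA C)
    (hconj : ∀ (c : C) (S : Set C), S.Nonempty → A.seq c (sInf S) = ⨅ d ∈ S, A.seq c d)
    (c : C) : A.star c = ⨅ i, A.pow c i := by
  set f : C →o C := ⟨fun x => A.nil ⊓ A.seq c x,
    fun _ _ h => inf_le_inf_left _ (A.seq_mono_right c h)⟩ with hf
  have hseq : A.seq c (⨅ i, A.pow c i) = ⨅ i, A.seq c (A.pow c i) := by
    rw [iInf, hconj c _ (Set.range_nonempty _), iInf_range]
  have hstar : A.star c = OrderHom.gfp f := rfl
  apply le_antisymm
  · -- star c ≤ pow c i for all i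
    refine le_iInf fun i => ?_
    induction i with
    | zero =>
        have h1 : A.star c = A.nil ⊓ A.seq c (A.star c) := by
          rw [hstar]; exact (OrderHom.map_gfp f).symm
        calc A.star c ≤ A.nil ⊓ A.seq c (A.star c) := h1.le
          _ ≤ A.nil := inf_le_left
    | succ i ih =>
        have h1 : A.star c = A.nil ⊓ A.seq c (A.star c) := by
          rw [hstar]; exact (OrderHom.map_gfp f).symm
        calc A.star c ≤ A.nil ⊓ A.seq c (A.star c) := h1.le
          _ ≤ A.seq c (A.star c) := inf_le_right
          _ ≤ A.seq c (A.pow c i) := A.seq_mono_right c ih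
  · -- ⨅ i, pow c i is a postfixed point
    rw [hstar]
    refine OrderHom.le_gfp f ?_
    show (⨅ i, A.pow c i) ≤ A.nil ⊓ A.seq c (⨅ i, A.pow c i)
    refine le_inf (iInf_le _ 0) ?_
    rw [hseq]
    exact le_iInf fun i => iInf_le _ (i + 1)

lemma seq_iInf_right' (A : CRA C)
    (hconj : ∀ (c : C) (S : Set C), S.Nonempty → A.seq c (sInf S) = ⨅ d ∈ S, A.seq c d)
    {ι : Sort*} [Nonempty ι] (e : C) (g : ι → C) :
    A.seq e (⨅ i, g i) = ⨅ i, A.seq e (g i) := by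
  rw [iInf, hconj e _ (Set.range_nonempty g), iInf_range]

lemma seq_inf' (A : CRA C)
    (hconj : ∀ (c : C) (S : Set C), S.Nonempty → A.seq c (sInf S) = ⨅ d ∈ S, A.seq c d)
    (e x y : C) : A.seq e (x ⊓ y) = A.seq e x ⊓ A.seq e y := by
  have h := hconj e {x, y} (by simp)
  rw [sInf_pair] at h
  rw [h, iInf_pair]

end CRAaux

theorem atomic_iteration_finite {C : Type*} [CompleteDistribLattice C] (A : CRA C)
    (hconj : ∀ (c : C) (S : Set C), S.Nonempty → A.seq c (sInf S) = ⨅ d ∈ S, A.seq c d) (a b c d : C) (ha : A.Atomic a) (hb : A.Atomic b) :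
    A.par (A.seq (A.star a) c) (A.seq (A.star b) d) =
      A.seq (A.star (A.par a b))
        (A.par c d ⊓ A.par c (A.seq b (A.seq (A.star b) d)) ⊓
          A.par (A.seq a (A.seq (A.star a) c)) d) := by
  have hstar := CRAaux.star_eq A hconj
  have key : ∀ n i j, A.seq (A.pow (A.par a b) n)
      (A.par (A.seq (A.pow a i) c) (A.seq (A.pow b j) d))
      = A.par (A.seq (A.pow a (n+i)) c) (A.seq (A.pow b (n+j)) d) := by
    intro n i j
    rw [CRAaux.pow_add', CRAaux.pow_add', A.seq_assoc, A.seq_assoc,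
        CRAaux.pow_interchange A ha hb]
  have key00 : ∀ n, A.seq (A.pow (A.par a b) n) (A.par c d)
      = A.par (A.seq (A.pow a n) c) (A.seq (A.pow b n) d) := by
    intro n
    have h := key n 0 0
    simpa [show A.pow a 0 = A.nil from rfl, show A.pow b 0 = A.nil from rfl,
      A.nil_seq] using h
  have key0R : ∀ n j, A.seq (A.pow (A.par a b) n) (A.par c (A.seq (A.pow b j) d))
      = A.par (A.seq (A.pow a n) c) (A.seq (A.pow b (n+j)) d) := by
    intro n j
    have h := key n 0 j
    simpa [show A.pow a 0 = A.nil from rfl, A.nil_seq] using h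
  have key0L : ∀ n i, A.seq (A.pow (A.par a b) n) (A.par (A.seq (A.pow a i) c) d)
      = A.par (A.seq (A.pow a (n+i)) c) (A.seq (A.pow b n) d) := by
    intro n i
    have h := key n i 0
    simpa [show A.pow b 0 = A.nil from rfl, A.nil_seq] using h
  -- LHS as a double infimum
  have hL : A.par (A.seq (A.star a) c) (A.seq (A.star b) d)
      = ⨅ i, ⨅ j, A.par (A.seq (A.pow a i) c) (A.seq (A.pow b j) d) := by
    rw [hstar a, hstar b, CRAaux.seq_iInf_left', CRAaux.seq_iInf_left',
        CRAaux.par_iInf_left']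
    exact iInf_congr fun i => CRAaux.par_iInf_right' A _ _
  -- residual terms as infima
  have hbd : A.seq b (A.seq (A.star b) d) = ⨅ j, A.seq (A.pow b (j+1)) d := by
    rw [hstar b, CRAaux.seq_iInf_left', CRAaux.seq_iInf_right' A hconj]
    exact iInf_congr fun j => (A.seq_assoc b (A.pow b j) d).symm
  have hac : A.seq a (A.seq (A.star a) c) = ⨅ i, A.seq (A.pow a (i+1)) c := by
    rw [hstar a, CRAaux.seq_iInf_left', CRAaux.seq_iInf_right' A hconj]
    exact iInf_congr fun i => (A.seq_assoc a (A.pow a i) c).symm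
  -- rewrite the RHS
  have hR : A.seq (A.star (A.par a b))
        (A.par c d ⊓ A.par c (A.seq b (A.seq (A.star b) d)) ⊓
          A.par (A.seq a (A.seq (A.star a) c)) d)
      = ⨅ n, ((A.par (A.seq (A.pow a n) c) (A.seq (A.pow b n) d) ⊓
          ⨅ j, A.par (A.seq (A.pow a n) c) (A.seq (A.pow b (n+(j+1))) d)) ⊓
          ⨅ i, A.par (A.seq (A.pow a (n+(i+1))) c) (A.seq (A.pow b n) d)) := by
    rw [hbd, hac, CRAaux.par_iInf_right', CRAaux.par_iInf_left',
        hstar (A.par a b), CRAaux.seq_iInf_left']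
    refine iInf_congr fun n => ?_
    rw [CRAaux.seq_inf' A hconj, CRAaux.seq_inf' A hconj,
        CRAaux.seq_iInf_right' A hconj, CRAaux.seq_iInf_right' A hconj, key00]
    rw [iInf_congr fun j => key0R n (j+1), iInf_congr fun i => key0L n (i+1)]
  rw [hL, hR]
  -- combinatorial core
  set F : ℕ → ℕ → C := fun i j =>
    A.par (A.seq (A.pow a i) c) (A.seq (A.pow b j) d) with hF
  show (⨅ i, ⨅ j, F i j) = ⨅ n, ((F n n ⊓ ⨅ j, F n (n+(j+1))) ⊓ ⨅ i, F (n+(i+1)) n)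
  have hle : ∀ x y, (⨅ i, ⨅ j, F i j) ≤ F x y := fun x y =>
    (iInf_le _ x).trans (iInf_le _ y)
  apply le_antisymm
  · refine le_iInf fun n => le_inf (le_inf (hle n n) ?_) ?_
    · exact le_iInf fun j => hle _ _
    · exact le_iInf fun i => hle _ _
  · refine le_iInf fun i => le_iInf fun j => ?_
    rcases lt_trichotomy i j with h | h | h
    · refine (iInf_le _ i).trans (inf_le_left.trans (inf_le_right.trans ?_))
      have := iInf_le (fun k => F i (i+(k+1))) (j - i - 1)
      have hidx : i + (j - i - 1 + 1) = j := by omega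
      rwa [hidx] at this
    · subst h
      exact (iInf_le _ i).trans (inf_le_left.trans inf_le_left)
    · refine (iInf_le _ j).trans (inf_le_right.trans ?_)
      have := iInf_le (fun k => F (j+(k+1)) j) (i - j - 1)
      have hidx : j + (i - j - 1 + 1) = i := by omega
      rwa [hidx] at this
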